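/- Let p > 3 be a prime. Define T(p) as the number-weighted sum ∑ over u, a, b ∈ F_p^× with (a-1)²(u·ā-1)(u·b-1) ≡ (b-1)²(u·b̄-1)(u·a-1) mod p of χ₀((a-1)²(u·ā-1)(u·b-1)), i.e., the count of triples where additionally the common value is nonzero mod p. Then T(p) = (p-5)(2p-5) - (2|p) + ∑' (Δ(a,b) | p), where Δ(a,b) = (1 - a²b²)² + 4ab(a+b-2)(a+b-2ab) and the sum ∑' runs over pairs a, b ∈ F_p^× with a ≢ b and a + b - 2ab ≢ 0 mod p. -/

import Mathlib

open Finset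

/-- `T(p)`: the number of triples `(u,a,b)` of nonzero residues mod `p` with
`(a-1)²(uā-1)(ub-1) ≡ (b-1)²(ub̄-1)(ua-1)` and the common value nonzero mod `p`. -/
def T (p : ℕ) [Fact p.Prime] : ℤ :=
  ∑ u ∈ univ.filter (fun u : ZMod p => u ≠ 0),
    ∑ a ∈ univ.filter (fun a : ZMod p => a ≠ 0),
      ∑ b ∈ univ.filter (fun b : ZMod p => b ≠ 0),
        if (a - 1) ^ 2 * (u * a⁻¹ - 1) * (u * b - 1)
              = (b - 1) ^ 2 * (u * b⁻¹ - 1) * (u * a - 1)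
            ∧ (a - 1) ^ 2 * (u * a⁻¹ - 1) * (u * b - 1) ≠ 0
        then 1 else 0

namespace Stmt15

variable {p : ℕ} [Fact p.Prime]

lemma two_ne (hp : 3 < p) : (2 : ZMod p) ≠ 0 := by
  have : ((2:ℕ) : ZMod p) ≠ 0 := by
    rw [Ne, ZMod.natCast_eq_zero_iff]
    intro h
    have := Nat.le_of_dvd (by norm_num) h
    omega
  simpa using this

lemma three_ne (hp : 3 < p) : (3 : ZMod p) ≠ 0 := by
  have : ((3:ℕ) : ZMod p) ≠ 0 := by
    rw [Ne, ZMod.natCast_eq_zero_iff]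
    intro h
    have := Nat.le_of_dvd (by norm_num) h
    omega
  simpa using this

lemma four_ne (hp : 3 < p) : (4 : ZMod p) ≠ 0 := by
  have h2 := two_ne hp
  intro h
  exact h2 (by
    rcases mul_eq_zero.1 (show (2:ZMod p)*2 = 0 by linear_combination h) with h'|h' <;>
      exact h')

lemma one_ne_negone (hp : 3 < p) : (1 : ZMod p) ≠ -1 := fun h => two_ne hp (by linear_combination h)

lemma quad_count (hp : 3 < p) (A B C : ZMod p) (hA : A ≠ 0) :
    ((univ.filter fun u : ZMod p => A*u^2 + B*u + C = 0).card : ℤ)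
      = 1 + quadraticChar (ZMod p) (B^2 - 4*A*C) := by
  have h2 : (2 : ZMod p) ≠ 0 := two_ne hp
  have hk : 2*A ≠ 0 := mul_ne_zero h2 hA
  have hiff : ∀ u : ZMod p, (A*u^2 + B*u + C = 0) ↔ ((2*A*u+B)^2 = B^2-4*A*C) := by
    intro u
    constructor
    · intro h; linear_combination 4*A*h
    · intro h
      have h4 : (2*A) * (2 * (A*u^2+B*u+C)) = 0 := by linear_combination h
      rcases mul_eq_zero.1 h4 with h'|h'
      · exact absurd h' hk
      rcases mul_eq_zero.1 h' with h'|h'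
      · exact absurd h' h2
      · exact h'
  rw [show (univ.filter fun u : ZMod p => A*u^2 + B*u + C = 0)
      = univ.filter fun u : ZMod p => (2*A*u+B)^2 = B^2-4*A*C from
    filter_congr fun u _ => by rw [hiff u]]
  have hcard : (univ.filter fun u : ZMod p => (2*A*u+B)^2 = B^2-4*A*C).card
      = (univ.filter fun x : ZMod p => x^2 = B^2-4*A*C).card := by
    apply card_nbij' (fun u => 2*A*u+B) (fun x => (2*A)⁻¹*(x-B))
    · intro u hu; simp only [mem_coe, mem_filter, mem_univ, true_and] at hu ⊢; exact hu
    · intro x hx; simp only [mem_coe, mem_filter, mem_univ, true_and] at hx ⊢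
      rw [show 2*A*((2*A)⁻¹*(x-B))+B = x by field_simp; ring]
      exact hx
    · intro u _; field_simp; ring
    · intro x _; field_simp; ring
  rw [hcard]
  have hchar : ringChar (ZMod p) ≠ 2 := by rw [ZMod.ringChar_zmod_n]; omega
  have := quadraticChar_card_sqrts hchar (B^2-4*A*C)
  rw [Set.toFinset_setOf] at this
  rw [this]; ring


lemma card_univ_sdiff (s : Finset (ZMod p)) :
    (((univ \ s : Finset (ZMod p))).card : ℤ) = (p:ℤ) - s.card := by
  rw [card_sdiff_of_subset (subset_univ _), card_univ, ZMod.card,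
    Nat.cast_sub (by simpa [ZMod.card] using card_le_univ s)]

def qq (a b u : ZMod p) : ZMod p :=
  -(a+b-2*a*b)*u^2 + (1-a^2*b^2)*u + a*b*(a+b-2)

def CSet (a b : ZMod p) : Finset (ZMod p) :=
  univ.filter fun u => (a-b) * qq a b u = 0 ∧ u ≠ 0 ∧ a ≠ 1 ∧ u ≠ a ∧ u*b ≠ 1

lemma CSet_mem {a b u : ZMod p} :
    u ∈ CSet a b ↔ ((a-b)*qq a b u = 0 ∧ u ≠ 0 ∧ a ≠ 1 ∧ u ≠ a ∧ u*b ≠ 1) := by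
  simp [CSet]

lemma cnt_eq {a b : ZMod p} (ha : a ≠ 0) (hb : b ≠ 0) :
    (univ.filter fun u : ZMod p => u ≠ 0 ∧
      ((a-1)^2*(u*a⁻¹-1)*(u*b-1) = (b-1)^2*(u*b⁻¹-1)*(u*a-1)
        ∧ (a-1)^2*(u*a⁻¹-1)*(u*b-1) ≠ 0)) = CSet a b := by
  unfold CSet
  apply filter_congr
  intro u _
  have hE : ((a-1)^2*(u*a⁻¹-1)*(u*b-1) = (b-1)^2*(u*b⁻¹-1)*(u*a-1))
      ↔ (a-b) * qq a b u = 0 := by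
    have key : ((a-1)^2*(u*a⁻¹-1)*(u*b-1) - (b-1)^2*(u*b⁻¹-1)*(u*a-1)) * (a*b)
        = (a-b) * qq a b u := by
      unfold qq; field_simp <;> ring
    rw [← sub_eq_zero (b := (b-1)^2*(u*b⁻¹-1)*(u*a-1))]
    constructor
    · intro h; rw [← key, h, zero_mul]
    · intro h
      rcases mul_eq_zero.1 (key.trans h) with h'|h'
      · exact h'
      · exact absurd h' (mul_ne_zero ha hb)
  have hV : ((a-1)^2*(u*a⁻¹-1)*(u*b-1) = 0) ↔ (a = 1 ∨ u = a ∨ u*b = 1) := by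
    have key : ((a-1)^2*(u*a⁻¹-1)*(u*b-1)) * a = (a-1)^2*(u-a)*(u*b-1) := by
      field_simp <;> ring
    constructor
    · intro h
      have h2 : (a-1)^2*(u-a)*(u*b-1) = 0 := by rw [← key, h, zero_mul]
      rcases mul_eq_zero.1 h2 with h3|h3
      · rcases mul_eq_zero.1 h3 with h4|h4
        · exact Or.inl (sub_eq_zero.1 (pow_eq_zero_iff two_ne_zero |>.1 h4))
        · exact Or.inr (Or.inl (sub_eq_zero.1 h4))
      · exact Or.inr (Or.inr (sub_eq_zero.1 h3))
    · rintro (h|h|h)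
      · rw [h]; ring
      · rw [h, mul_inv_cancel₀ ha]; ring
      · rw [h]; ring
  simp only [hE, Ne, hV]
  tauto

lemma card_filter_not (s : Finset (ZMod p)) :
    (univ.filter fun u : ZMod p => u ∉ s).card = p - s.card := by
  rw [show (univ.filter fun u : ZMod p => u ∉ s) = univ \ s by
      rw [Finset.filter_not, Finset.filter_mem_eq_inter, univ_inter],
    card_sdiff_of_subset (subset_univ s), card_univ, ZMod.card]

lemma neg_one_ne_zero' : (-1 : ZMod p) ≠ 0 := by
  simpa using (neg_ne_zero.2 (one_ne_zero (α := ZMod p)))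

lemma CSet_diag (hp : 3 < p) {a : ZMod p} (ha : a ≠ 0) :
    ((CSet a a).card : ℤ)
      = if a = 1 then 0 else if a = -1 then (p:ℤ)-2 else (p:ℤ)-3 := by
  have h2 : (2 : ZMod p) ≠ 0 := two_ne hp
  have hple : 3 ≤ p := by omega
  by_cases ha1 : a = 1
  · subst ha1
    simp [CSet]
  · rw [if_neg ha1]
    have hset : CSet a a = univ.filter fun u : ZMod p => u ∉ ({0, a, a⁻¹} : Finset (ZMod p)) := by
      unfold CSet
      apply filter_congr
      intro u _
      have : u * a = 1 ↔ u = a⁻¹ := by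
        constructor
        · intro h; exact eq_inv_of_mul_eq_one_left h
        · intro h; rw [h]; exact inv_mul_cancel₀ ha
      simp only [sub_self, zero_mul, true_and, mem_insert, mem_singleton, this]
      tauto
    rw [hset, card_filter_not]
    by_cases han : a = -1
    · rw [if_pos han]
      have : ({0, a, a⁻¹} : Finset (ZMod p)) = {0, -1} := by
        rw [han]; norm_num
      rw [this]
      have h01 : (0 : ZMod p) ≠ -1 := fun h => neg_one_ne_zero' h.symm
      rw [card_insert_of_notMem (by simp [h01]), card_singleton]
      have : 2 ≤ p := by omega
      push_cast [Nat.cast_sub this]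
      ring
    · rw [if_neg han]
      have hainv : a ≠ a⁻¹ := by
        intro h
        have : a * a = 1 := by nth_rewrite 2 [h]; exact mul_inv_cancel₀ ha
        have : (a-1)*(a+1) = 0 := by linear_combination this
        rcases mul_eq_zero.1 this with h'|h'
        · exact ha1 (sub_eq_zero.1 h')
        · exact han (eq_neg_of_add_eq_zero_left h')
      have hcard : ({0, a, a⁻¹} : Finset (ZMod p)).card = 3 := by
        rw [card_insert_of_notMem (by simp [ha.symm, (inv_ne_zero ha).symm]),
          card_insert_of_notMem (by simp [hainv]), card_singleton]
      rw [hcard]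
      push_cast [Nat.cast_sub hple]
      ring


lemma CSet_b1 (a : ZMod p) : CSet a 1 = ∅ := by
  rw [eq_empty_iff_forall_notMem]
  intro u hu
  obtain ⟨hq, hu0, ha1, hua, hub⟩ := CSet_mem.1 hu
  have hfac : (a-1)^2*(u-1)*(u-a) = 0 := by
    unfold qq at hq; linear_combination hq
  rcases mul_eq_zero.1 hfac with h3|h3
  · rcases mul_eq_zero.1 h3 with h4|h4
    · exact ha1 (sub_eq_zero.1 (pow_eq_zero_iff two_ne_zero |>.1 h4))
    · exact hub (by rw [mul_one]; exact sub_eq_zero.1 h4)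
  · exact hua (sub_eq_zero.1 h3)

lemma CSet_L (hp : 3 < p) {a b : ZMod p} (ha : a ≠ 0) (hb : b ≠ 0)
    (ha1 : a ≠ 1) (hb1 : b ≠ 1) (hab : a ≠ b) (hL : a + b - 2*a*b = 0) :
    ((CSet a b).card : ℤ) = if a = -1 ∨ b = -1 ∨ a*b = -1 then 0 else 1 := by
  have h2 : (2 : ZMod p) ≠ 0 := two_ne hp
  have hab1 : a*b ≠ 1 := by
    intro h
    rcases mul_eq_zero.1 (show (a-1)*(b-1) = 0 by linear_combination -h - hL) with h'|h'
    · exact ha1 (sub_eq_zero.1 h')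
    · exact hb1 (sub_eq_zero.1 h')
  have h1m : (1 : ZMod p) - a*b ≠ 0 := fun h => hab1 (by linear_combination -h)
  have habne : a - b ≠ 0 := sub_ne_zero.2 hab
  have hroot : ∀ u : ZMod p, (a-b)*qq a b u = 0 ↔ (1+a*b)*u - 2*a*b = 0 := by
    intro u
    have hkey : qq a b u = (1-a*b)*((1+a*b)*u - 2*a*b) := by
      unfold qq; linear_combination (a*b - u^2) * hL
    rw [hkey]
    constructor
    · intro h
      rcases mul_eq_zero.1 h with h'|h'
      · exact absurd h' habne
      · rcases mul_eq_zero.1 h' with h''|h''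
        · exact absurd h'' h1m
        · exact h''
    · intro h; rw [h]; ring
  by_cases hm : a*b = -1
  · rw [if_pos (Or.inr (Or.inr hm))]
    norm_cast
    rw [Finset.card_eq_zero, eq_empty_iff_forall_notMem]
    intro u hu
    obtain ⟨hq, hu0, -, hua, hub⟩ := CSet_mem.1 hu
    have hf := (hroot u).1 hq
    have hm' : a*b + 1 = 0 := by linear_combination hm
    exact h2 (by linear_combination hf + (2-u)*hm')
  by_cases han : a = -1
  · rw [if_pos (Or.inl han)]
    norm_cast
    rw [Finset.card_eq_zero, eq_empty_iff_forall_notMem]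
    intro u hu
    obtain ⟨hq, hu0, -, hua, hub⟩ := CSet_mem.1 hu
    have hf := (hroot u).1 hq
    subst han
    have h3b : 3*b - 1 = 0 := by linear_combination hL
    have : (1-b)*(u+1) = 0 := by linear_combination hf - h3b
    rcases mul_eq_zero.1 this with h'|h'
    · exact hb1 (by linear_combination -h')
    · exact hua (by linear_combination h')
  by_cases hbn : b = -1
  · rw [if_pos (Or.inr (Or.inl hbn))]
    norm_cast
    rw [Finset.card_eq_zero, eq_empty_iff_forall_notMem]
    intro u hu
    obtain ⟨hq, hu0, -, hua, hub⟩ := CSet_mem.1 hu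
    have hf := (hroot u).1 hq
    subst hbn
    have h3a : 3*a - 1 = 0 := by linear_combination hL
    have : (1-a)*(u+1) = 0 := by linear_combination hf - h3a
    rcases mul_eq_zero.1 this with h'|h'
    · exact ha1 (by linear_combination -h')
    · exact hub (by linear_combination -h')
  · rw [if_neg (by simp [han, hbn, hm])]
    have h1p : (1 : ZMod p) + a*b ≠ 0 := fun h => hm (by linear_combination h)
    obtain ⟨u₀, hfu⟩ : ∃ u₀ : ZMod p, (1+a*b)*u₀ = 2*a*b :=
      ⟨2*a*b/(1+a*b), by field_simp⟩
    have hne0 : u₀ ≠ 0 := by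
      intro h; rw [h, mul_zero] at hfu
      exact (mul_ne_zero (mul_ne_zero h2 ha) hb) hfu.symm
    have hnea : u₀ ≠ a := by
      intro h; rw [h] at hfu
      have : b*(a-1)*(a+1) = 0 := by linear_combination hfu - hL
      rcases mul_eq_zero.1 this with h'|h'
      · rcases mul_eq_zero.1 h' with h''|h''
        · exact hb h''
        · exact ha1 (by linear_combination h'')
      · exact han (by linear_combination h')
    have hneb : u₀*b ≠ 1 := by
      intro h
      have heq2 : 2*a*b*b = (1+a*b) := by
        rw [← hfu, mul_assoc, h, mul_one]
      have : (b-1)*(b+1) = 0 := by linear_combination heq2 + b*hL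
      rcases mul_eq_zero.1 this with h'|h'
      · exact hb1 (by linear_combination h')
      · exact hbn (by linear_combination h')
    have hset : CSet a b = {u₀} := by
      ext u
      rw [CSet_mem, mem_singleton]
      constructor
      · rintro ⟨hq, -, -, -, -⟩
        have hf := (hroot u).1 hq
        have : (1+a*b)*(u - u₀) = 0 := by linear_combination hf - hfu
        rcases mul_eq_zero.1 this with h'|h'
        · exact absurd h' h1p
        · exact sub_eq_zero.1 h'
      · intro h
        rw [h]
        exact ⟨(hroot u₀).2 (by linear_combination hfu), hne0, ha1, hnea, hneb⟩
    rw [hset, card_singleton, Nat.cast_one]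


lemma CSet_S (hp : 3 < p) {a b : ZMod p} (ha : a ≠ 0) (hb : b ≠ 0)
    (ha1 : a ≠ 1) (hb1 : b ≠ 1) (hab : a ≠ b) (hS : a + b - 2*a*b ≠ 0) :
    ((CSet a b).card : ℤ)
      = 1 + quadraticChar (ZMod p) ((1-a^2*b^2)^2 + 4*a*b*(a+b-2)*(a+b-2*a*b))
        - (if a+b-2 = 0 then 1 else 0) - (if a = -1 ∨ b = -1 then 1 else 0) := by
  have h2 : (2 : ZMod p) ≠ 0 := two_ne hp
  have habne : a - b ≠ 0 := sub_ne_zero.2 hab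
  have hm1 : (-1 : ZMod p) ≠ 0 := by
    intro h; exact one_ne_zero (α := ZMod p) (by linear_combination -h)
  set X : Finset (ZMod p) := univ.filter fun u => qq a b u = 0 with hX
  set Y : Finset (ZMod p) :=
    univ.filter fun u => qq a b u = 0 ∧ (u = 0 ∨ u = a ∨ u*b = 1) with hY
  -- the count of all roots
  have hXcard : (X.card : ℤ)
      = 1 + quadraticChar (ZMod p) ((1-a^2*b^2)^2 + 4*a*b*(a+b-2)*(a+b-2*a*b)) := by
    have := quad_count hp (-(a+b-2*a*b)) (1-a^2*b^2) (a*b*(a+b-2)) (neg_ne_zero.2 hS)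
    rw [show (1-a^2*b^2)^2 - 4*(-(a+b-2*a*b))*(a*b*(a+b-2))
        = (1-a^2*b^2)^2 + 4*a*b*(a+b-2)*(a+b-2*a*b) by ring] at this
    rw [hX, ← this]
    norm_num [qq]
  -- characterize the bad roots
  have hbad : ∀ u : ZMod p, (qq a b u = 0 ∧ (u = 0 ∨ u = a ∨ u*b = 1))
      ↔ ((a+b-2 = 0 ∧ u = 0) ∨ ((a = -1 ∨ b = -1) ∧ u = -1)) := by
    intro u
    constructor
    · rintro ⟨hq, (h|h|h)⟩
      · subst h
        left
        refine ⟨?_, rfl⟩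
        have h4 : a*b*(a+b-2) = 0 := by unfold qq at hq; linear_combination hq
        rcases mul_eq_zero.1 h4 with h'|h'
        · exact absurd h' (mul_ne_zero ha hb)
        · exact h'
      · rw [h] at hq
        have h4 : a*(1-b)^2*((1-a)*(1+a)) = 0 := by
          unfold qq at hq; linear_combination hq
        rcases mul_eq_zero.1 h4 with h'|h'
        · rcases mul_eq_zero.1 h' with h''|h''
          · exact absurd h'' ha
          · exact absurd (sub_eq_zero.1 (pow_eq_zero_iff two_ne_zero |>.1 h'')).symm hb1
        · rcases mul_eq_zero.1 h' with h''|h''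
          · exact absurd (by linear_combination -h'' : a = 1) ha1
          · have ham : a = -1 := by linear_combination h''
            exact Or.inr ⟨Or.inl ham, by rw [h, ham]⟩
      · have h5 : a*(b-1)^3*(b+1)*b = 0 := by
          unfold qq at hq
          linear_combination b^3*hq + ((a+b-2*a*b)*b^2*u + a*b*(1-2*b+a*b^3))*h
        have h6 : a*(b-1)^3*(b+1) = 0 := by
          rcases mul_eq_zero.1 h5 with h'|h'
          · exact h'
          · exact absurd h' hb
        rcases mul_eq_zero.1 h6 with h'|h'
        · rcases mul_eq_zero.1 h' with h''|h''
          · exact absurd h'' ha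
          · exact absurd (sub_eq_zero.1 (pow_eq_zero_iff three_ne_zero |>.1 h'')) hb1
        · have hbm : b = -1 := by linear_combination h'
          refine Or.inr ⟨Or.inr hbm, ?_⟩
          rw [hbm] at h
          linear_combination -h
    · rintro (⟨h4, h0⟩|⟨hm, hm1'⟩)
      · subst h0
        exact ⟨by unfold qq; linear_combination a*b*h4, Or.inl rfl⟩
      · subst hm1'
        rcases hm with h'|h'
        · subst h'
          exact ⟨by unfold qq; ring, Or.inr (Or.inl rfl)⟩
        · subst h'
          exact ⟨by unfold qq; ring, Or.inr (Or.inr (by norm_num))⟩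
  -- the card of the bad set
  have hYcard : (Y.card : ℤ)
      = (if a+b-2 = 0 then 1 else 0) + (if a = -1 ∨ b = -1 then 1 else 0) := by
    by_cases hA : a+b-2 = 0 <;> by_cases hB : a = -1 ∨ b = -1
    · rw [if_pos hA, if_pos hB]
      have : Y = {0, -1} := by
        ext u; rw [hY, mem_filter]; simp [hbad u, hA, hB]
      rw [this, card_insert_of_notMem (by simp [hm1.symm ∘ Eq.symm]), card_singleton]
      norm_num
    · rw [if_pos hA, if_neg hB]
      have : Y = {0} := by
        ext u; rw [hY, mem_filter]; simp [hbad u, hA, hB]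
      rw [this, card_singleton]; norm_num
    · rw [if_neg hA, if_pos hB]
      have : Y = {-1} := by
        ext u; rw [hY, mem_filter]; simp [hbad u, hA, hB]
      rw [this, card_singleton]; norm_num
    · rw [if_neg hA, if_neg hB]
      have : Y = ∅ := by
        ext u; rw [hY, mem_filter]; simp [hbad u, hA, hB]
      rw [this, card_empty]; norm_num
  -- CSet = X minus Y
  have hsplit : Y.card + (CSet a b).card = X.card := by
    have h1 : Y = X.filter (fun u => u = 0 ∨ u = a ∨ u*b = 1) := by
      rw [hY, hX, filter_filter]
    have h2' : CSet a b = X.filter (fun u => ¬(u = 0 ∨ u = a ∨ u*b = 1)) := by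
      rw [hX, filter_filter]
      unfold CSet
      apply filter_congr
      intro u _
      have hq : (a-b) * qq a b u = 0 ↔ qq a b u = 0 := by
        constructor
        · intro h
          rcases mul_eq_zero.1 h with h'|h'
          · exact absurd h' habne
          · exact h'
        · intro h; rw [h, mul_zero]
      rw [hq]
      push_neg
      constructor
      · rintro ⟨hq', h0', -, h4', h5'⟩; exact ⟨hq', h0', h4', h5'⟩
      · rintro ⟨hq', h0', h4', h5'⟩; exact ⟨hq', h0', ha1, h4', h5'⟩
    rw [h1, h2']
    exact card_filter_add_card_filter_not _
  have hcast := congrArg (Nat.cast : ℕ → ℤ) hsplit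
  push_cast at hcast
  linarith [hXcard, hYcard, hcast]


def dd (p : ℕ) (a b : ZMod p) : ℤ :=
  if a = b then (if a = 1 then 0 else if a = -1 then (p:ℤ)-2 else (p:ℤ)-3)
  else if a = 1 ∨ b = 1 then -1
  else if a + b - 2*a*b = 0 then (if a = -1 ∨ b = -1 ∨ a*b = -1 then 0 else 1)
  else 1 - (if a+b-2 = 0 then 1 else 0) - (if a = -1 then 1 else 0)
    - (if b = -1 then 1 else 0)

lemma pointwise (hp : 3 < p) {a b : ZMod p} (ha : a ≠ 0) (hb : b ≠ 0) :
    ((CSet a b).card : ℤ) = dd p a b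
      + (if a ≠ b ∧ a + b - 2*a*b ≠ 0
          then (quadraticChar (ZMod p)
            ((1-a^2*b^2)^2 + 4*a*b*(a+b-2)*(a+b-2*a*b)) : ℤ) else 0) := by
  unfold dd
  by_cases hab : a = b
  · subst hab
    rw [if_pos rfl, if_neg (show ¬(a ≠ a ∧ a + a - 2*a*a ≠ 0) from fun h => h.1 rfl), add_zero]
    exact CSet_diag hp ha
  by_cases ha1 : a = 1
  · rw [if_neg hab, if_pos (Or.inl ha1)]
    subst ha1
    have hb1' : b ≠ 1 := fun h => hab h.symm
    have : CSet 1 b = ∅ := by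
      rw [eq_empty_iff_forall_notMem]; intro u hu; exact (CSet_mem.1 hu).2.2.1 rfl
    rw [this, card_empty,
      if_pos (show (1:ZMod p) ≠ b ∧ 1 + b - 2*1*b ≠ 0 from ⟨hab, fun h => hab (by linear_combination h)⟩),
      show (1-(1:ZMod p)^2*b^2)^2 + 4*1*b*(1+b-2)*(1+b-2*1*b) = ((b-1)^2)^2 by ring,
      quadraticChar_sq_one' (pow_ne_zero 2 (sub_ne_zero.2 hb1'))]
    norm_num
  by_cases hb1 : b = 1
  · rw [if_neg hab, if_pos (Or.inr hb1)]
    subst hb1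
    rw [CSet_b1 a, card_empty,
      if_pos (show a ≠ (1:ZMod p) ∧ a + 1 - 2*a*1 ≠ 0 from ⟨hab, fun h => ha1 (by linear_combination -h)⟩),
      show (1-a^2*(1:ZMod p)^2)^2 + 4*a*1*(a+1-2)*(a+1-2*a*1) = ((a-1)^2)^2 by ring,
      quadraticChar_sq_one' (pow_ne_zero 2 (sub_ne_zero.2 ha1))]
    norm_num
  by_cases hL : a + b - 2*a*b = 0
  · rw [if_neg hab, if_neg (by simp [ha1, hb1]), if_pos hL,
      if_neg (show ¬(a ≠ b ∧ a + b - 2*a*b ≠ 0) from fun h => h.2 hL), add_zero]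
    exact CSet_L hp ha hb ha1 hb1 hab hL
  · rw [if_neg hab, if_neg (by simp [ha1, hb1]), if_neg hL, if_pos (show a ≠ b ∧ a + b - 2*a*b ≠ 0 from ⟨hab, hL⟩),
      CSet_S hp ha hb ha1 hb1 hab hL]
    have hsum : (if a = -1 ∨ b = -1 then (1:ℤ) else 0)
        = (if a = -1 then (1:ℤ) else 0) + (if b = -1 then 1 else 0) := by
      by_cases h1 : a = -1 <;> by_cases h2 : b = -1
      · exact absurd (h1.trans h2.symm) hab
      · simp [h1, h2]
      · simp [h1, h2]
      · simp [h1, h2]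
    rw [hsum]
    ring


def nz (p : ℕ) [Fact p.Prime] : Finset (ZMod p) := univ.filter (· ≠ 0)

def S2 (p : ℕ) [Fact p.Prime] : Finset (ZMod p × ZMod p) := nz p ×ˢ nz p

lemma mem_nz {x : ZMod p} : x ∈ nz p ↔ x ≠ 0 := by simp [nz]

lemma mem_S2 {x : ZMod p × ZMod p} : x ∈ S2 p ↔ x.1 ≠ 0 ∧ x.2 ≠ 0 := by
  simp [S2, mem_nz, Finset.mem_product]

lemma nz_card : ((nz p).card : ℤ) = (Fintype.card (ZMod p) : ℤ) - 1 := by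
  rw [nz, filter_ne', card_erase_of_mem (mem_univ _), card_univ]
  have : 1 ≤ Fintype.card (ZMod p) := Fintype.card_pos
  push_cast [Nat.cast_sub this]
  ring

lemma sum_diag (hp : 3 < p) :
    ∑ x ∈ (S2 p).filter (fun x => x.1 = x.2), dd p x.1 x.2
      = ((p:ℤ)-1)*((p:ℤ)-3) + (3-(p:ℤ)) + 1 := by
  have hP : Fintype.card (ZMod p) = p := ZMod.card p
  have himg : (S2 p).filter (fun x => x.1 = x.2) = (nz p).image (fun a => (a,a)) := by
    ext ⟨x1, x2⟩
    simp only [mem_filter, mem_image, mem_S2, mem_nz]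
    constructor
    · rintro ⟨⟨h1, h2⟩, h3⟩
      subst h3
      exact ⟨x1, h1, rfl⟩
    · rintro ⟨a, ha, h⟩
      injection h with e1 e2
      subst e1; subst e2
      exact ⟨⟨ha, ha⟩, rfl⟩
  rw [himg, sum_image (by intro x _ y _ h; injection h)]
  have hpt : ∀ a ∈ nz p, dd p a a
      = ((p:ℤ)-3) + (if a = 1 then (3-(p:ℤ)) else 0) + (if a = -1 then 1 else 0) := by
    intro a _
    unfold dd
    rw [if_pos rfl]
    by_cases h1 : a = 1
    · rw [if_pos h1, if_pos h1, if_neg (h1 ▸ one_ne_negone hp)]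
      ring
    · rw [if_neg h1, if_neg h1]
      by_cases h2 : a = -1
      · rw [if_pos h2, if_pos h2]; ring
      · rw [if_neg h2, if_neg h2]; ring
  rw [sum_congr rfl hpt]
  rw [sum_add_distrib, sum_add_distrib, sum_const, sum_ite_eq' (nz p) 1 (fun _ => (3-(p:ℤ))),
    sum_ite_eq' (nz p) (-1) (fun _ => (1:ℤ)),
    if_pos (mem_nz.2 one_ne_zero), if_pos (mem_nz.2 (fun h => one_ne_zero (α := ZMod p) (by linear_combination -h)))]
  rw [nsmul_eq_mul]
  have hnz : ((nz p).card : ℤ) = (p:ℤ) - 1 := by rw [nz_card, hP]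
  rw [hnz]

lemma sum_R1 (hp : 3 < p) :
    ∑ x ∈ ((S2 p).filter (fun x => ¬ x.1 = x.2)).filter (fun x => x.1 = 1 ∨ x.2 = 1),
        dd p x.1 x.2 = -(2*((p:ℤ)-2)) := by
  have hP : Fintype.card (ZMod p) = p := ZMod.card p
  set R := ((S2 p).filter (fun x => ¬ x.1 = x.2)).filter (fun x => x.1 = 1 ∨ x.2 = 1) with hR
  have hval : ∀ x ∈ R, dd p x.1 x.2 = -1 := by
    intro x hx
    rw [hR, mem_filter, mem_filter] at hx
    obtain ⟨⟨-, hne⟩, hor⟩ := hx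
    unfold dd
    rw [if_neg hne, if_pos hor]
  rw [sum_congr rfl hval, sum_const]
  -- R = {1} ×ˢ (nz \ {1}) ∪ (nz \ {1}) ×ˢ {1}
  have hsplit : R = ({1} ×ˢ ((nz p).erase 1)) ∪ (((nz p).erase 1) ×ˢ {1}) := by
    ext x
    rw [hR]
    simp only [mem_filter, mem_union, Finset.mem_product, mem_singleton, mem_erase, mem_S2,
      mem_nz]
    constructor
    · rintro ⟨⟨⟨h1, h2⟩, hne⟩, (h|h)⟩
      · exact Or.inl ⟨h, fun hh => hne (h ▸ hh ▸ rfl), h2⟩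
      · exact Or.inr ⟨⟨fun hh => hne (by rw [h, hh]), h1⟩, h⟩
    · rintro (⟨h1, h2, h3⟩|⟨⟨h1, h2⟩, h3⟩)
      · exact ⟨⟨⟨by rw [h1]; exact one_ne_zero, h3⟩, by rw [h1]; exact fun hh => h2 hh.symm⟩,
          Or.inl h1⟩
      · exact ⟨⟨⟨h2, by rw [h3]; exact one_ne_zero⟩, by rw [h3]; exact h1⟩, Or.inr h3⟩
  have hdisj : Disjoint ({1} ×ˢ ((nz p).erase 1)) ((((nz p).erase 1)) ×ˢ ({1} : Finset (ZMod p))) := by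
    rw [Finset.disjoint_left]
    rintro x hx hy
    simp only [Finset.mem_product, mem_singleton, mem_erase] at hx hy
    exact hy.1.1 hx.1
  have hcounts : ((nz p).erase 1).card = p - 2 := by
    rw [card_erase_of_mem (mem_nz.2 one_ne_zero)]
    have : (nz p).card = p - 1 := by
      have := nz_card (p := p)
      rw [hP] at this
      omega
    omega
  rw [hsplit, card_union_of_disjoint hdisj, Finset.card_product, Finset.card_product,
    card_singleton, hcounts]
  have h2p : 2 ≤ p := by omega
  rw [nsmul_eq_mul]
  push_cast [Nat.cast_sub h2p]
  ring


def R2set (p : ℕ) [Fact p.Prime] : Finset (ZMod p × ZMod p) :=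
  (((S2 p).filter (fun x => ¬ x.1 = x.2)).filter
    (fun x => ¬(x.1 = 1 ∨ x.2 = 1))).filter
      (fun x => x.1 + x.2 - 2*x.1*x.2 = 0)

lemma mem_R2set {x : ZMod p × ZMod p} :
    x ∈ R2set p ↔ (x.1 ≠ 0 ∧ x.2 ≠ 0 ∧ x.1 ≠ x.2 ∧ x.1 ≠ 1 ∧ x.2 ≠ 1
      ∧ x.1 + x.2 - 2*x.1*x.2 = 0) := by
  simp only [R2set, mem_filter, mem_S2, not_or]
  tauto

lemma R2_card (hp : 3 < p) : ((R2set p).card : ℤ) = (p:ℤ) - 3 := by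
  have h2 := two_ne hp
  obtain ⟨c, hc⟩ : ∃ c : ZMod p, 2*c = 1 := ⟨2⁻¹, mul_inv_cancel₀ h2⟩
  have himg : R2set p = (univ \ {0, 1, c}).image
      (fun a : ZMod p => (a, a*(2*a-1)⁻¹)) := by
    ext ⟨a, b⟩
    simp only [mem_R2set, mem_image, mem_sdiff, mem_univ, true_and, mem_insert, mem_singleton,
      not_or]
    constructor
    · rintro ⟨ha, hb, hab, ha1, hb1, hL⟩
      have h2a : 2*a - 1 ≠ 0 := fun h => ha (by linear_combination hL + b*h)
      refine ⟨a, ⟨ha, ha1, ?_⟩, ?_⟩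
      · intro h
        exact h2a (by linear_combination 2*h + hc)
      · have hb' : b = a*(2*a-1)⁻¹ := by
          rw [eq_mul_inv_iff_mul_eq₀ h2a]
          linear_combination -hL
        rw [← hb']
    · rintro ⟨a', ⟨ha0, ha1, hac⟩, h⟩
      injection h with e1 e2
      subst e1
      have h2a : 2*a' - 1 ≠ 0 := by
        intro h
        refine hac ?_
        have h5 : 2*(a' - c) = 0 := by linear_combination h - hc
        rcases mul_eq_zero.1 h5 with h'|h'
        · exact absurd h' h2
        · linear_combination h'
      have hb' : b*(2*a'-1) = a' := by
        rw [← e2, mul_assoc, inv_mul_cancel₀ h2a, mul_one]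
      have hbne : b ≠ 0 := by
        intro h
        rw [h, zero_mul] at hb'
        exact ha0 hb'.symm
      refine ⟨ha0, hbne, ?_, ha1, ?_, ?_⟩
      · intro h
        rw [← h] at hb'
        have h5 : a'*(2*a' - 2) = 0 := by linear_combination hb'
        rcases mul_eq_zero.1 h5 with h'|h'
        · exact ha0 h'
        · refine ha1 ?_
          have h6 : 2*(a'-1) = 0 := by linear_combination h'
          rcases mul_eq_zero.1 h6 with h''|h''
          · exact absurd h'' h2
          · linear_combination h''
      · intro h
        rw [h, one_mul] at hb'
        exact ha1 (by linear_combination hb')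
      · have h5 : (a' + b - 2*a'*b)*(2*a'-1) = 0 := by linear_combination (1-2*a')*hb'
        rcases mul_eq_zero.1 h5 with h'|h'
        · exact h'
        · exact absurd h' h2a
  rw [himg, card_image_of_injective _ (fun x y h => by injection h), card_univ_sdiff]
  have hc0 : c ≠ 0 := by intro h; rw [h, mul_zero] at hc; exact one_ne_zero hc.symm
  have hc1 : c ≠ 1 := by
    intro h; rw [h, mul_one] at hc
    exact one_ne_zero (α := ZMod p) (by linear_combination hc)
  have h01 : (0 : ZMod p) ≠ 1 := fun h => one_ne_zero h.symm
  rw [card_insert_of_notMem (by simp [h01, hc0.symm]),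
    card_insert_of_notMem (by simp [hc1.symm]), card_singleton]
  norm_num

lemma sum_R2 (hp : 3 < p) :
    ∑ x ∈ R2set p, dd p x.1 x.2 = (p:ℤ) - 6 - quadraticChar (ZMod p) 2 := by
  have h2 := two_ne hp
  have h3 := three_ne hp
  have h4 := four_ne hp
  obtain ⟨t, h3t⟩ : ∃ t : ZMod p, 3*t = 1 := ⟨3⁻¹, mul_inv_cancel₀ h3⟩
  have ht1 : t ≠ 1 := by
    intro h; rw [h, mul_one] at h3t
    exact h2 (by linear_combination h3t)
  have htm : t ≠ -1 := by
    intro h; rw [h] at h3t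
    exact h4 (by linear_combination -h3t)
  have htm' : (-1 : ZMod p) ≠ t := fun h => htm h.symm
  have ht0 : t ≠ 0 := by
    intro h; rw [h, mul_zero] at h3t; exact one_ne_zero h3t.symm
  -- value of dd on the region
  have hval : ∀ x ∈ R2set p, dd p x.1 x.2
      = if x.1 = -1 ∨ x.2 = -1 ∨ x.1*x.2 = -1 then 0 else 1 := by
    intro x hx
    obtain ⟨-, -, hab, h1, hb1, hL⟩ := mem_R2set.1 hx
    unfold dd
    rw [if_neg hab, if_neg (by tauto), if_pos hL]
  rw [sum_congr rfl hval]
  have hswap : ∀ x : ZMod p × ZMod p,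
      (if x.1 = -1 ∨ x.2 = -1 ∨ x.1*x.2 = -1 then (0:ℤ) else 1)
      = if ¬(x.1 = -1 ∨ x.2 = -1 ∨ x.1*x.2 = -1) then (1:ℤ) else 0 := by
    intro x
    by_cases h : x.1 = -1 ∨ x.2 = -1 ∨ x.1*x.2 = -1 <;> simp [h]
  rw [sum_congr rfl (fun x _ => hswap x), sum_boole]
  -- split and count the bad set
  have hA1 : (R2set p).filter (fun x => x.1 = -1) = {(-1, t)} := by
    ext ⟨a, b⟩
    simp only [mem_filter, mem_R2set, mem_singleton, Prod.mk.injEq]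
    constructor
    · rintro ⟨⟨-, -, -, -, -, hL⟩, h1⟩
      subst h1
      refine ⟨rfl, ?_⟩
      have : 3*(b - t) = 0 := by linear_combination hL - h3t
      rcases mul_eq_zero.1 this with h'|h'
      · exact absurd h' h3
      · linear_combination h'
    · rintro ⟨e1, e2⟩
      subst e1; subst e2
      exact ⟨⟨neg_ne_zero.2 one_ne_zero, ht0, htm', fun h => one_ne_negone hp h.symm, ht1,
        by linear_combination h3t⟩, rfl⟩
  have hA2 : (R2set p).filter (fun x => ¬x.1 = -1 ∧ x.2 = -1) = {(t, -1)} := by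
    ext ⟨a, b⟩
    simp only [mem_filter, mem_R2set, mem_singleton, Prod.mk.injEq]
    constructor
    · rintro ⟨⟨-, -, -, -, -, hL⟩, -, h1⟩
      subst h1
      refine ⟨?_, rfl⟩
      have : 3*(a - t) = 0 := by linear_combination hL - h3t
      rcases mul_eq_zero.1 this with h'|h'
      · exact absurd h' h3
      · linear_combination h'
    · rintro ⟨e1, e2⟩
      subst e1; subst e2
      exact ⟨⟨ht0, neg_ne_zero.2 one_ne_zero, htm, ht1, fun h => one_ne_negone hp h.symm,
        by linear_combination h3t⟩, htm, rfl⟩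
  have hA3 : (R2set p).filter (fun x => ¬x.1 = -1 ∧ ¬x.2 = -1 ∧ x.1*x.2 = -1)
      = (univ.filter (fun a : ZMod p => 1*a^2 + 2*a + (-1) = 0)).image
          (fun a => (a, -2-a)) := by
    ext ⟨a, b⟩
    simp only [mem_filter, mem_R2set, mem_image, mem_univ, true_and, Prod.mk.injEq]
    constructor
    · rintro ⟨⟨-, -, -, -, -, hL⟩, -, -, hm⟩
      have hsum : a + b = -2 := by linear_combination hL + 2*hm
      refine ⟨a, ?_, rfl, by linear_combination -hsum⟩
      have hb : b = -2 - a := by linear_combination hsum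
      rw [hb] at hm
      linear_combination -hm
    · rintro ⟨a', hroot, e1, e2⟩
      subst e1
      have hb : -2 - a' = b := e2
      subst hb
      refine ⟨⟨?_, ?_, ?_, ?_, ?_, by linear_combination 2*hroot⟩, ?_, ?_,
        by linear_combination -hroot⟩
      · intro h; rw [h] at hroot
        exact one_ne_zero (α := ZMod p) (by linear_combination -hroot)
      · intro h
        have h5 : a' = -2 := by linear_combination -h
        rw [h5] at hroot
        exact one_ne_zero (α := ZMod p) (by linear_combination -hroot)
      · intro h
        have h5 : 2*(a'+1) = 0 := by linear_combination h
        rcases mul_eq_zero.1 h5 with h'|h'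
        · exact h2 h'
        · have h6 : a' = -1 := by linear_combination h'
          rw [h6] at hroot
          exact h2 (by linear_combination -hroot)
      · intro h; rw [h] at hroot
        exact h2 (by linear_combination hroot)
      · intro h
        have h5 : a' = -3 := by linear_combination -h
        rw [h5] at hroot
        exact h2 (by linear_combination hroot)
      · intro h; rw [h] at hroot
        exact h2 (by linear_combination -hroot)
      · intro h
        have h5 : a' = -1 := by linear_combination -h
        rw [h5] at hroot
        exact h2 (by linear_combination -hroot)
  -- assemble the count
  have hWcard : ((univ.filter (fun a : ZMod p => 1*a^2 + 2*a + (-1) = 0)).card : ℤ)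
      = 1 + quadraticChar (ZMod p) 2 := by
    rw [quad_count hp 1 2 (-1) one_ne_zero,
      show (2:ZMod p)^2 - 4*1*(-1) = 2^2*2 by ring, map_mul,
      quadraticChar_sq_one' h2, one_mul]
  have hsplitbad : (R2set p).filter (fun x => x.1 = -1 ∨ x.2 = -1 ∨ x.1*x.2 = -1)
      = ((R2set p).filter (fun x => x.1 = -1))
        ∪ (((R2set p).filter (fun x => ¬x.1 = -1 ∧ x.2 = -1))
          ∪ ((R2set p).filter (fun x => ¬x.1 = -1 ∧ ¬x.2 = -1 ∧ x.1*x.2 = -1))) := by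
    ext x
    simp only [mem_filter, mem_union]
    tauto
  have hdisj1 : Disjoint ((R2set p).filter (fun x => ¬x.1 = -1 ∧ x.2 = -1))
      ((R2set p).filter (fun x => ¬x.1 = -1 ∧ ¬x.2 = -1 ∧ x.1*x.2 = -1)) := by
    rw [Finset.disjoint_left]
    intro x hx hy
    rw [mem_filter] at hx hy
    tauto
  have hdisj2 : Disjoint ((R2set p).filter (fun x => x.1 = -1))
      (((R2set p).filter (fun x => ¬x.1 = -1 ∧ x.2 = -1))
        ∪ ((R2set p).filter (fun x => ¬x.1 = -1 ∧ ¬x.2 = -1 ∧ x.1*x.2 = -1))) := by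
    rw [Finset.disjoint_left]
    intro x hx hy
    rw [mem_filter] at hx
    rw [mem_union, mem_filter, mem_filter] at hy
    tauto
  have hbadcard : (((R2set p).filter
        (fun x => x.1 = -1 ∨ x.2 = -1 ∨ x.1*x.2 = -1)).card : ℤ)
      = 3 + quadraticChar (ZMod p) 2 := by
    rw [hsplitbad, card_union_of_disjoint hdisj2, card_union_of_disjoint hdisj1,
      hA1, hA2, hA3, card_singleton, card_singleton,
      card_image_of_injective _ (fun x y h => by injection h)]
    push_cast
    rw [hWcard]
    ring
  have hpart := card_filter_add_card_filter_not
    (s := R2set p) (p := fun x => x.1 = -1 ∨ x.2 = -1 ∨ x.1*x.2 = -1)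
  have hcast := congrArg (Nat.cast : ℕ → ℤ) hpart
  push_cast at hcast
  have hR2 := R2_card hp
  linarith [hbadcard, hcast, hR2]


def R3set (p : ℕ) [Fact p.Prime] : Finset (ZMod p × ZMod p) :=
  (((S2 p).filter (fun x => ¬ x.1 = x.2)).filter
    (fun x => ¬(x.1 = 1 ∨ x.2 = 1))).filter
      (fun x => ¬(x.1 + x.2 - 2*x.1*x.2 = 0))

lemma mem_R3set {x : ZMod p × ZMod p} :
    x ∈ R3set p ↔ (x.1 ≠ 0 ∧ x.2 ≠ 0 ∧ x.1 ≠ x.2 ∧ x.1 ≠ 1 ∧ x.2 ≠ 1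
      ∧ x.1 + x.2 - 2*x.1*x.2 ≠ 0) := by
  simp only [R3set, mem_filter, mem_S2, not_or]
  tauto

lemma R3_card (hp : 3 < p) : ((R3set p).card : ℤ) = ((p:ℤ)-3)^2 := by
  have h01 : (0 : ZMod p) ≠ 1 := fun h => one_ne_zero h.symm
  set E : Finset (ZMod p) := univ \ {0, 1} with hE
  have hEcard : (E.card : ℤ) = (p:ℤ) - 2 := by
    rw [hE, card_univ_sdiff, card_insert_of_notMem (by simp [h01]), card_singleton]
    norm_num
  set M : Finset (ZMod p × ZMod p) :=
    ((S2 p).filter (fun x => ¬ x.1 = x.2)).filter (fun x => ¬(x.1 = 1 ∨ x.2 = 1)) with hM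
  have hMeq : M = (E ×ˢ E).filter (fun x => ¬ x.1 = x.2) := by
    ext x
    rw [hM]
    simp only [mem_filter, mem_S2, Finset.mem_product, hE, mem_sdiff, mem_univ, true_and,
      mem_insert, mem_singleton, not_or]
    tauto
  have hMdiag : (E ×ˢ E).filter (fun x => x.1 = x.2) = E.image (fun a => (a,a)) := by
    ext ⟨x1, x2⟩
    simp only [mem_filter, mem_image, Finset.mem_product]
    constructor
    · rintro ⟨⟨h1, h2⟩, h3⟩
      subst h3
      exact ⟨x1, h1, rfl⟩
    · rintro ⟨a, ha, h⟩
      injection h with e1 e2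
      subst e1; subst e2
      exact ⟨⟨ha, ha⟩, rfl⟩
  have hpart := card_filter_add_card_filter_not
    (s := E ×ˢ E) (p := fun x => x.1 = x.2)
  rw [hMdiag, card_image_of_injective _ (fun x y h => by injection h),
    Finset.card_product, ← hMeq] at hpart
  have hMZ : (M.card : ℤ) = ((p:ℤ)-2)*((p:ℤ)-2) - ((p:ℤ)-2) := by
    have hc := congrArg (Nat.cast : ℕ → ℤ) hpart
    push_cast at hc
    rw [hEcard] at hc
    linarith
  have hpart2 := card_filter_add_card_filter_not
    (s := M) (p := fun x => x.1 + x.2 - 2*x.1*x.2 = 0)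
  have hR2 : M.filter (fun x => x.1 + x.2 - 2*x.1*x.2 = 0) = R2set p := by rw [hM]; rfl
  have hR3 : M.filter (fun x => ¬(x.1 + x.2 - 2*x.1*x.2 = 0)) = R3set p := by rw [hM]; rfl
  rw [hR2, hR3] at hpart2
  have hcast2 := congrArg (Nat.cast : ℕ → ℤ) hpart2
  push_cast at hcast2
  have hR2Z := R2_card hp
  linear_combination hcast2 - hR2Z + hMZ

lemma c1_card (hp : 3 < p) :
    (((R3set p).filter (fun x => x.1 + x.2 - 2 = 0)).card : ℤ) = (p:ℤ) - 3 := by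
  have h2 := two_ne hp
  have h01 : (0 : ZMod p) ≠ 1 := fun h => one_ne_zero h.symm
  have h20 : (2 : ZMod p) ≠ 0 := h2
  have h21 : (2 : ZMod p) ≠ 1 := fun h => one_ne_zero (α := ZMod p) (by linear_combination h)
  have himg : (R3set p).filter (fun x => x.1 + x.2 - 2 = 0)
      = (univ \ {0, 1, 2}).image (fun a : ZMod p => (a, 2-a)) := by
    ext ⟨a, b⟩
    simp only [mem_filter, mem_R3set, mem_image, mem_sdiff, mem_univ, true_and, mem_insert,
      mem_singleton, not_or, Prod.mk.injEq]
    constructor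
    · rintro ⟨⟨ha, hb, hab, ha1, hb1, hL⟩, hs⟩
      refine ⟨a, ⟨ha, ha1, ?_⟩, rfl, by linear_combination -hs⟩
      intro h
      rw [h] at hs
      exact hb (by linear_combination hs)
    · rintro ⟨a', ⟨ha0, ha1, ha2⟩, e1, e2⟩
      subst e1
      have hb : 2 - a' = b := e2
      subst hb
      refine ⟨⟨ha0, ?_, ?_, ha1, ?_, ?_⟩, by ring⟩
      · intro h
        exact ha2 (by linear_combination -h)
      · intro h
        have h5 : 2*(a'-1) = 0 := by linear_combination h
        rcases mul_eq_zero.1 h5 with h'|h'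
        · exact h2 h'
        · exact ha1 (by linear_combination h')
      · intro h
        exact ha1 (by linear_combination -h)
      · intro h
        have h5 : 2*((a'-1)*(a'-1)) = 0 := by linear_combination h
        rcases mul_eq_zero.1 h5 with h'|h'
        · exact h2 h'
        · rcases mul_eq_zero.1 h' with h''|h''
          · exact ha1 (by linear_combination h'')
          · exact ha1 (by linear_combination h'')
  rw [himg, card_image_of_injective _ (fun x y h => by injection h), card_univ_sdiff]
  rw [card_insert_of_notMem (by simp [h01, h20.symm]),
    card_insert_of_notMem (by simp [h21.symm]), card_singleton]
  norm_num

lemma c2_card (hp : 3 < p) :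
    (((R3set p).filter (fun x => x.1 = -1)).card : ℤ) = (p:ℤ) - 4 := by
  have h2 := two_ne hp
  have h3 := three_ne hp
  have h4 := four_ne hp
  obtain ⟨t, h3t⟩ : ∃ t : ZMod p, 3*t = 1 := ⟨3⁻¹, mul_inv_cancel₀ h3⟩
  have ht1 : t ≠ 1 := fun h => h2 (by rw [h, mul_one] at h3t; linear_combination h3t)
  have htm : t ≠ -1 := fun h => h4 (by rw [h] at h3t; linear_combination -h3t)
  have ht0 : t ≠ 0 := fun h => one_ne_zero (α := ZMod p)
    (by rw [h, mul_zero] at h3t; linear_combination -h3t)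
  have h01 : (0 : ZMod p) ≠ 1 := fun h => one_ne_zero h.symm
  have hm0 : (-1 : ZMod p) ≠ 0 := neg_ne_zero.2 one_ne_zero
  have hm1 : (-1 : ZMod p) ≠ 1 := fun h => one_ne_negone hp h.symm
  have himg : (R3set p).filter (fun x => x.1 = -1)
      = (univ \ {0, 1, -1, t}).image (fun b : ZMod p => ((-1 : ZMod p), b)) := by
    ext ⟨a, b⟩
    simp only [mem_filter, mem_R3set, mem_image, mem_sdiff, mem_univ, true_and, mem_insert,
      mem_singleton, not_or, Prod.mk.injEq]
    constructor
    · rintro ⟨⟨ha, hb, hab, ha1, hb1, hL⟩, hs⟩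
      subst hs
      refine ⟨b, ⟨hb, hb1, fun h => hab h.symm, ?_⟩, rfl, rfl⟩
      intro h
      subst h
      exact hL (by linear_combination h3t)
    · rintro ⟨b', ⟨hb0, hb1, hbm, hbt⟩, e1, e2⟩
      subst e1
      have hb : b' = b := e2
      subst hb
      refine ⟨⟨hm0, hb0, fun h => hbm h.symm, hm1, hb1, ?_⟩, rfl⟩
      intro h
      refine hbt ?_
      have h5 : 3*(b' - t) = 0 := by linear_combination h - h3t
      rcases mul_eq_zero.1 h5 with h'|h'
      · exact absurd h' h3
      · linear_combination h'
  rw [himg, card_image_of_injective _ (fun x y h => by injection h), card_univ_sdiff]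
  rw [card_insert_of_notMem (by simp [h01, hm0.symm, ht0.symm]),
    card_insert_of_notMem (by simp [hm1.symm, ht1.symm]),
    card_insert_of_notMem (by simp [htm.symm]), card_singleton]
  norm_num

lemma c3_card (hp : 3 < p) :
    (((R3set p).filter (fun x => x.2 = -1)).card : ℤ) = (p:ℤ) - 4 := by
  have h2 := two_ne hp
  have h3 := three_ne hp
  have h4 := four_ne hp
  obtain ⟨t, h3t⟩ : ∃ t : ZMod p, 3*t = 1 := ⟨3⁻¹, mul_inv_cancel₀ h3⟩
  have ht1 : t ≠ 1 := fun h => h2 (by rw [h, mul_one] at h3t; linear_combination h3t)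
  have htm : t ≠ -1 := fun h => h4 (by rw [h] at h3t; linear_combination -h3t)
  have ht0 : t ≠ 0 := fun h => one_ne_zero (α := ZMod p)
    (by rw [h, mul_zero] at h3t; linear_combination -h3t)
  have h01 : (0 : ZMod p) ≠ 1 := fun h => one_ne_zero h.symm
  have hm0 : (-1 : ZMod p) ≠ 0 := neg_ne_zero.2 one_ne_zero
  have hm1 : (-1 : ZMod p) ≠ 1 := fun h => one_ne_negone hp h.symm
  have himg : (R3set p).filter (fun x => x.2 = -1)
      = (univ \ {0, 1, -1, t}).image (fun b : ZMod p => (b, (-1 : ZMod p))) := by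
    ext ⟨a, b⟩
    simp only [mem_filter, mem_R3set, mem_image, mem_sdiff, mem_univ, true_and, mem_insert,
      mem_singleton, not_or, Prod.mk.injEq]
    constructor
    · rintro ⟨⟨ha, hb, hab, ha1, hb1, hL⟩, hs⟩
      subst hs
      refine ⟨a, ⟨ha, ha1, hab, ?_⟩, rfl, rfl⟩
      intro h
      subst h
      exact hL (by linear_combination h3t)
    · rintro ⟨b', ⟨hb0, hb1, hbm, hbt⟩, e1, e2⟩
      subst e1
      have hb : b = -1 := e2.symm
      subst hb
      refine ⟨⟨hb0, hm0, hbm, hb1, hm1, ?_⟩, rfl⟩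
      intro h
      refine hbt ?_
      have h5 : 3*(b' - t) = 0 := by linear_combination h - h3t
      rcases mul_eq_zero.1 h5 with h'|h'
      · exact absurd h' h3
      · linear_combination h'
  rw [himg, card_image_of_injective _ (fun x y h => by injection h), card_univ_sdiff]
  rw [card_insert_of_notMem (by simp [h01, hm0.symm, ht0.symm]),
    card_insert_of_notMem (by simp [hm1.symm, ht1.symm]),
    card_insert_of_notMem (by simp [htm.symm]), card_singleton]
  norm_num

lemma sum_R3 (hp : 3 < p) :
    ∑ x ∈ R3set p, dd p x.1 x.2
      = ((p:ℤ)-3)^2 - ((p:ℤ)-3) - 2*((p:ℤ)-4) := by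
  have hval : ∀ x ∈ R3set p, dd p x.1 x.2
      = 1 - (if x.1+x.2-2 = 0 then 1 else 0) - (if x.1 = -1 then 1 else 0)
        - (if x.2 = -1 then 1 else 0) := by
    intro x hx
    obtain ⟨-, -, hab, h1, hb1, hL⟩ := mem_R3set.1 hx
    unfold dd
    rw [if_neg hab, if_neg (by tauto), if_neg hL]
  rw [sum_congr rfl hval]
  rw [sum_sub_distrib, sum_sub_distrib, sum_sub_distrib, sum_const,
    sum_boole, sum_boole, sum_boole, nsmul_eq_mul, mul_one]
  rw [c1_card hp, c2_card hp, c3_card hp, R3_card hp]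
  ring


lemma sum_dd (hp : 3 < p) :
    ∑ x ∈ S2 p, dd p x.1 x.2 = ((p:ℤ)-5)*(2*(p:ℤ)-5) - quadraticChar (ZMod p) 2 := by
  rw [← sum_filter_add_sum_filter_not (S2 p) (fun x => x.1 = x.2) (fun x => dd p x.1 x.2),
    ← sum_filter_add_sum_filter_not ((S2 p).filter (fun x => ¬ x.1 = x.2))
      (fun x => x.1 = 1 ∨ x.2 = 1) (fun x => dd p x.1 x.2),
    ← sum_filter_add_sum_filter_not (((S2 p).filter (fun x => ¬ x.1 = x.2)).filter
      (fun x => ¬(x.1 = 1 ∨ x.2 = 1)))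
      (fun x => x.1 + x.2 - 2*x.1*x.2 = 0) (fun x => dd p x.1 x.2)]
  have e2 : (((S2 p).filter (fun x => ¬ x.1 = x.2)).filter
      (fun x => ¬(x.1 = 1 ∨ x.2 = 1))).filter
      (fun x => x.1 + x.2 - 2*x.1*x.2 = 0) = R2set p := rfl
  have e3 : (((S2 p).filter (fun x => ¬ x.1 = x.2)).filter
      (fun x => ¬(x.1 = 1 ∨ x.2 = 1))).filter
      (fun x => ¬(x.1 + x.2 - 2*x.1*x.2 = 0)) = R3set p := rfl
  rw [e2, e3, sum_diag hp, sum_R1 hp, sum_R2 hp, sum_R3 hp]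
  ring

lemma leg_eq (x : ZMod p) :
    legendreSym p ((x.val : ℤ)) = quadraticChar (ZMod p) x := by
  have hx : (((x.val : ℤ)) : ZMod p) = x := by
    push_cast [ZMod.natCast_val, ZMod.cast_id]
    rfl
  rw [legendreSym, hx]


end Stmt15

open Stmt15


theorem stmt_15 (p : ℕ) [Fact p.Prime] (hp : 3 < p) :
    T p = ((p : ℤ) - 5) * (2 * p - 5) - legendreSym p 2
        + ∑ a ∈ univ.filter (fun a : ZMod p => a ≠ 0),
            ∑ b ∈ univ.filter (fun b : ZMod p => b ≠ 0 ∧ a ≠ b ∧ a + b - 2 * a * b ≠ 0),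
              legendreSym p ((((1 - a ^ 2 * b ^ 2) ^ 2
                + 4 * a * b * (a + b - 2) * (a + b - 2 * a * b) : ZMod p)).val : ℤ) := by
  classical
  have hT : T p = ∑ a ∈ univ.filter (fun a : ZMod p => a ≠ 0),
      ∑ b ∈ univ.filter (fun b : ZMod p => b ≠ 0), ((Stmt15.CSet a b).card : ℤ) := by
    rw [T, Finset.sum_comm]
    refine sum_congr rfl ?_
    intro a ha
    rw [Finset.sum_comm]
    refine sum_congr rfl ?_
    intro b hb
    rw [sum_boole, filter_filter,
      Stmt15.cnt_eq (by simpa using ha) (by simpa using hb)]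
  rw [hT]
  have hpw : ∀ a ∈ univ.filter (fun a : ZMod p => a ≠ 0),
      (∑ b ∈ univ.filter (fun b : ZMod p => b ≠ 0), ((Stmt15.CSet a b).card : ℤ))
      = (∑ b ∈ univ.filter (fun b : ZMod p => b ≠ 0), Stmt15.dd p a b)
        + ∑ b ∈ univ.filter (fun b : ZMod p => b ≠ 0),
            (if a ≠ b ∧ a + b - 2*a*b ≠ 0
              then (quadraticChar (ZMod p)
                ((1-a^2*b^2)^2 + 4*a*b*(a+b-2)*(a+b-2*a*b)) : ℤ) else 0) := by
    intro a ha
    rw [← sum_add_distrib]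
    refine sum_congr rfl ?_
    intro b hb
    exact Stmt15.pointwise hp (by simpa using ha) (by simpa using hb)
  rw [sum_congr rfl hpw, sum_add_distrib]
  -- first part: the dd sum
  have hdd : (∑ a ∈ univ.filter (fun a : ZMod p => a ≠ 0),
      ∑ b ∈ univ.filter (fun b : ZMod p => b ≠ 0), Stmt15.dd p a b)
      = ((p:ℤ)-5)*(2*(p:ℤ)-5) - quadraticChar (ZMod p) 2 := by
    rw [← Finset.sum_product']
    exact Stmt15.sum_dd hp
  rw [hdd]
  -- second part: the character sum
  have hchi : ∀ a ∈ univ.filter (fun a : ZMod p => a ≠ 0),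
      (∑ b ∈ univ.filter (fun b : ZMod p => b ≠ 0),
        (if a ≠ b ∧ a + b - 2*a*b ≠ 0
          then (quadraticChar (ZMod p)
            ((1-a^2*b^2)^2 + 4*a*b*(a+b-2)*(a+b-2*a*b)) : ℤ) else 0))
      = ∑ b ∈ univ.filter (fun b : ZMod p => b ≠ 0 ∧ a ≠ b ∧ a + b - 2 * a * b ≠ 0),
          legendreSym p ((((1 - a ^ 2 * b ^ 2) ^ 2
            + 4 * a * b * (a + b - 2) * (a + b - 2 * a * b) : ZMod p)).val : ℤ) := by
    intro a _
    rw [Finset.sum_filter, Finset.sum_filter]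
    refine sum_congr rfl ?_
    intro b _
    by_cases hb0 : b ≠ 0
    · rw [if_pos hb0]
      by_cases hQ : a ≠ b ∧ a + b - 2*a*b ≠ 0
      · rw [if_pos hQ, if_pos (show b ≠ 0 ∧ a ≠ b ∧ a + b - 2*a*b ≠ 0 from ⟨hb0, hQ.1, hQ.2⟩),
          Stmt15.leg_eq]
      · rw [if_neg hQ, if_neg (fun h => hQ ⟨h.2.1, h.2.2⟩)]
    · rw [if_neg hb0, if_neg (fun h => hb0 h.1)]
  rw [sum_congr rfl hchi]
  have hleg2 : legendreSym p 2 = quadraticChar (ZMod p) 2 := by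
    have : (((2:ℤ)) : ZMod p) = 2 := by push_cast; ring
    rw [legendreSym, this]
  rw [hleg2]
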